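/- Let q,e be coprime positive integers with 1 < q < e and e_1 = gcd(e, q−1). If e_1 = q−1 and e < q^{k+1} − 1 for a positive integer k, then m(q,e) ≤ k·(q−1). -/

import Mathlib

def SumPowSet (q e : ℕ) : Set ℕ :=
  {t | 0 < t ∧ ∃ a : Fin t → ℕ, e ∣ ∑ i, q ^ a i}

/-- exponent list: digit `d` at position `i` contributes `d` copies of exponent `i`. -/
def expList : List ℕ → List ℕ
  | [] => []
  | d :: T => List.replicate d 0 ++ (expList T).map (· + 1)

lemma expList_length (D : List ℕ) : (expList D).length = D.sum := by
  induction D with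
  | nil => rfl
  | cons d T ih => simp [expList, ih]

lemma expList_sum (q : ℕ) (D : List ℕ) :
    ((expList D).map (q ^ ·)).sum = Nat.ofDigits q D := by
  induction D with
  | nil => simp [expList, Nat.ofDigits]
  | cons d T ih =>
    simp only [expList, List.map_append, List.sum_append, List.map_replicate,
      List.map_map, Nat.ofDigits_cons, ← ih]
    have h : ((q ^ ·) ∘ (· + 1)) = fun a => q * q ^ a := by
      funext a; simp [pow_succ, mul_comm]
    rw [h]
    simp [List.sum_replicate, ← List.sum_map_mul_left, Function.comp]

/-- If the digit sum is maximal, the number is at least `q ^ length - 1`. -/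
lemma ofDigits_ge_of_sum_max (q : ℕ) (hq : 1 < q) :
    ∀ D : List ℕ, (∀ d ∈ D, d < q) → D.length * (q - 1) ≤ D.sum →
      q ^ D.length ≤ Nat.ofDigits q D + 1 := by
  intro D
  induction D with
  | nil => simp
  | cons d T ih =>
    intro hlt hsum
    have hd : d < q := hlt d (by simp)
    have hT : ∀ x ∈ T, x < q := fun x hx => hlt x (by simp [hx])
    have hTsum : T.sum ≤ T.length * (q - 1) := by
      have := List.sum_le_card_nsmul T (q - 1) (fun x hx => by
        have := hT x hx; omega)
      simpa [smul_eq_mul, mul_comm] using this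
    simp only [List.length_cons, List.sum_cons] at hsum
    have hexp : (T.length + 1) * (q - 1) = T.length * (q - 1) + (q - 1) := by ring
    have hTge : T.length * (q - 1) ≤ T.sum := by omega
    have hdq : d = q - 1 := by omega
    have hih := ih hT hTge
    have hco : (Nat.ofDigits q (d :: T) : ℕ) = d + q * Nat.ofDigits q T := by
      simp [Nat.ofDigits_cons]
    rw [List.length_cons, hco, hdq, pow_succ]
    calc q ^ T.length * q ≤ (Nat.ofDigits q T + 1) * q := Nat.mul_le_mul_right q hih
      _ = q * Nat.ofDigits q T + q := by ring
      _ ≤ q - 1 + q * Nat.ofDigits q T + 1 := by omega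

theorem stmt_12 (q e k : ℕ) (h : Nat.Coprime q e) (h1 : 1 < q) (h2 : q < e)
    (hk : 0 < k) (he1 : Nat.gcd e (q - 1) = q - 1) (hlt : e < q ^ (k + 1) - 1)
    (m : ℕ) (hm : IsLeast (SumPowSet q e) m) :
    m ≤ k * (q - 1) := by
  have he0 : e ≠ 0 := by omega
  obtain ⟨D, hD⟩ : ∃ D, D = Nat.digits q e := ⟨_, rfl⟩
  obtain ⟨s, hs⟩ : ∃ s, s = D.sum := ⟨_, rfl⟩
  have hdlt : ∀ d ∈ D, d < q := fun d hd => Nat.digits_lt_base h1 (hD ▸ hd)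
  have hofd : Nat.ofDigits q D = e := by rw [hD]; exact Nat.ofDigits_digits q e
  have hpow1 : 1 ≤ q ^ (k + 1) := Nat.one_le_pow _ _ (by omega)
  -- length bound
  have hlen : D.length ≤ k + 1 := by
    have h3 : q ^ D.length ≤ q * e := by
      rw [hD]; exact Nat.base_pow_length_digits_le q e h1 he0
    have h4 : q * e < q * q ^ (k + 1) :=
      (mul_lt_mul_iff_right₀ (show 0 < q by omega)).mpr (by omega)
    have h5 : q ^ D.length < q ^ (k + 2) := by
      calc q ^ D.length ≤ q * e := h3
        _ < q * q ^ (k + 1) := h4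
        _ = q ^ (k + 2) := by ring
    have := (Nat.pow_lt_pow_iff_right h1).mp h5
    omega
  -- digit sum bound
  have hsle : s ≤ D.length * (q - 1) := by
    have := List.sum_le_card_nsmul D (q - 1) (fun x hx => by
      have := hdlt x hx; omega)
    rw [hs]
    simpa [smul_eq_mul, mul_comm] using this
  -- divisibility of the digit sum by q - 1
  have hdvd_e : (q - 1) ∣ e := he1 ▸ Nat.gcd_dvd_left e (q - 1)
  have hdvd_s : (q - 1) ∣ s := by
    rcases Nat.lt_or_ge q 3 with hq2 | hq3
    · have : q = 2 := by omega
      subst this; simp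
    · have hmod : q % (q - 1) = 1 := by
        obtain ⟨r, rfl⟩ : ∃ r, q = r + 3 := ⟨q - 3, by omega⟩
        rw [show r + 3 - 1 = r + 2 from rfl, show r + 3 = (r + 2) + 1 from rfl,
          Nat.add_mod_left]
        exact Nat.mod_eq_of_lt (by omega)
      have hme : e ≡ s [MOD q - 1] := by
        rw [hs, hD]; exact Nat.modEq_digits_sum (q - 1) q hmod e
      have he0' : e ≡ 0 [MOD q - 1] := (Nat.modEq_zero_iff_dvd).mpr hdvd_e
      exact (Nat.modEq_zero_iff_dvd).mp (hme.symm.trans he0')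
  -- the expList
  have hL : (expList D).length = s := by rw [expList_length, hs]
  have hLsum : ((expList D).map (q ^ ·)).sum = e := by rw [expList_sum, hofd]
  -- s is positive
  have hspos : 0 < s := by
    by_contra hz
    have hz0 : s = 0 := by omega
    have hnil : expList D = [] := List.length_eq_zero_iff.mp (by rw [hL, hz0])
    rw [hnil] at hLsum
    simp at hLsum
    omega
  -- s ≤ k * (q - 1)
  have hsbound : s ≤ k * (q - 1) := by
    by_contra hbig
    push_neg at hbig
    obtain ⟨c, hc0⟩ := hdvd_s
    have hc : s = c * (q - 1) := by rw [hc0, mul_comm]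
    have hck : k + 1 ≤ c := by
      by_contra hck
      push_neg at hck
      have h6 : c * (q - 1) ≤ k * (q - 1) := Nat.mul_le_mul_right _ (by omega)
      omega
    have hs1 : (k + 1) * (q - 1) ≤ s := by
      rw [hc]
      exact Nat.mul_le_mul_right _ hck
    have hlen2 : D.length = k + 1 := by
      by_contra hne
      have hle : D.length ≤ k := by omega
      have : D.length * (q - 1) ≤ k * (q - 1) := Nat.mul_le_mul_right _ hle
      omega
    have hge : D.length * (q - 1) ≤ s := by rw [hlen2]; exact hs1
    have hmax := ofDigits_ge_of_sum_max q h1 D hdlt (hs ▸ hge)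
    rw [hofd, hlen2] at hmax
    omega
  -- membership of s
  have key : ∀ t, (expList D).length = t → ∃ a : Fin t → ℕ, e ∣ ∑ i, q ^ a i := by
    rintro t rfl
    refine ⟨fun i => (expList D).get i, ?_⟩
    have hsum : ∑ i : Fin (expList D).length, q ^ (expList D).get i
        = ((expList D).map (q ^ ·)).sum := Fin.sum_univ_fun_getElem (expList D) (q ^ ·)
    rw [hsum, hLsum]
  have hmem : s ∈ SumPowSet q e := ⟨hspos, key s hL⟩
  exact le_trans (hm.2 hmem) hsbound
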